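/- Let β > 0 and suppose x, u, w : [0,∞) → ℝ are differentiable with x'(t) = −β x(t)(u(t) + w(t)), u'(t) = −β u(t) w(t) + β x(t)(u(t) + w(t)), w'(t) = β u(t) w(t) for all t ≥ 0, and with initial values x(0) = x₀ ≥ 0, u(0) = u₀ ≥ 0, w(0) = w₀ > 0 satisfying x₀ + u₀ + w₀ = 1. Then for all t ≥ 0, w(t) = (x₀ + (1 − x₀) e^{βt}) / (x₀ + (1 − x₀) e^{βt} + x₀ β t + (1 − w₀)/w₀), and consequently w(t) → 1 as t → ∞. -/

import Mathlib

open Filter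

open Set Real

lemma zero_of_linear_ode (c G : ℝ → ℝ) (hc : ContinuousOn c (Set.Ici 0))
    (hG : ∀ t : ℝ, 0 ≤ t → HasDerivAt G (c t * G t) t) (h0 : G 0 = 0) :
    ∀ t : ℝ, 0 ≤ t → G t = 0 := by
  intro b hb
  obtain ⟨K, hK⟩ := IsCompact.exists_bound_of_continuousOn isCompact_Icc
    (hc.mono (Set.Icc_subset_Ici_self : Set.Icc (0:ℝ) b ⊆ Set.Ici 0))
  have key := norm_le_gronwallBound_of_norm_deriv_right_le
    (f := G) (f' := fun t => c t * G t) (δ := 0) (K := K) (ε := 0) (a := 0) (b := b)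
    (fun s hs => ((hG s hs.1).continuousAt).continuousWithinAt)
    (fun s hs => ((hG s hs.1).hasDerivWithinAt))
    (by simp [h0])
    (fun s hs => by
      simp only [norm_mul, Real.norm_eq_abs, add_zero]
      exact mul_le_mul_of_nonneg_right (hK s ⟨hs.1, hs.2.le⟩) (abs_nonneg _))
    b ⟨hb, le_refl b⟩
  have : gronwallBound 0 K 0 (b - 0) = 0 := by
    rw [gronwallBound_ε0]; ring
  rw [this] at key
  exact norm_le_zero_iff.mp key

/-- In the closed conservative two-chunk fluid model with `γ = 0` (variables
`x` = no chunk, `u` = one chunk, `w` = both chunks, total mass 1), the mass of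
complete peers is `w(t) = (x₀ + (1−x₀)e^{βt})/(x₀ + (1−x₀)e^{βt} + x₀βt + (1−w₀)/w₀)`
and `w(t) → 1` as `t → ∞`. -/
theorem two_chunk_conservative_solution
    (β : ℝ) (hβ : 0 < β)
    (x u w : ℝ → ℝ)
    (x₀ u₀ w₀ : ℝ) (hx₀ : 0 ≤ x₀) (hu₀ : 0 ≤ u₀) (hw₀ : 0 < w₀)
    (hsum : x₀ + u₀ + w₀ = 1)
    (h0x : x 0 = x₀) (h0u : u 0 = u₀) (h0w : w 0 = w₀)
    (hx : ∀ t : ℝ, 0 ≤ t → HasDerivAt x (-β * x t * (u t + w t)) t)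
    (hu : ∀ t : ℝ, 0 ≤ t → HasDerivAt u (-β * u t * w t + β * x t * (u t + w t)) t)
    (hw : ∀ t : ℝ, 0 ≤ t → HasDerivAt w (β * u t * w t) t) :
    (∀ t : ℝ, 0 ≤ t →
      w t = (x₀ + (1 - x₀) * Real.exp (β * t))
          / (x₀ + (1 - x₀) * Real.exp (β * t) + x₀ * β * t + (1 - w₀) / w₀)) ∧
    Tendsto w atTop (nhds 1) := by
  set D : ℝ → ℝ := fun t => x₀ + (1 - x₀) * Real.exp (β * t) with hDdef
  set M : ℝ → ℝ := fun t => D t + x₀ * β * t + (1 - w₀) / w₀ with hMdef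
  clear_value D M
  have hx₀lt : x₀ < 1 := by nlinarith
  have hw₀le : w₀ ≤ 1 := by nlinarith
  have hDpos : ∀ t : ℝ, 0 < D t := fun t => by
    have := Real.exp_pos (β * t); simp only [hDdef]; nlinarith
  have hDone : ∀ t : ℝ, 0 ≤ t → 1 ≤ D t := fun t ht => by
    have h1 : 1 ≤ Real.exp (β * t) := Real.one_le_exp (by positivity)
    simp only [hDdef]; nlinarith
  have hMone : ∀ t : ℝ, 0 ≤ t → 1 ≤ M t := fun t ht => by
    have h1 := hDone t ht
    have h2 : 0 ≤ (1 - w₀) / w₀ := div_nonneg (by linarith) hw₀.le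
    have h3 : 0 ≤ x₀ * β * t := mul_nonneg (mul_nonneg hx₀ hβ.le) ht
    simp only [hMdef]; linarith
  have hD : ∀ t : ℝ, HasDerivAt D (β * (1 - x₀) * Real.exp (β * t)) t := fun t => by
    have h1 : HasDerivAt (fun t : ℝ => β * t) β t := by
      simpa using (hasDerivAt_id t).const_mul β
    have := (h1.exp.const_mul (1 - x₀)).const_add x₀
    (convert this using 1 <;> try rfl); ring
  have hM : ∀ t : ℝ, HasDerivAt M (β * D t) t := fun t => by
    have h1 : HasDerivAt (fun t : ℝ => x₀ * β * t) (x₀ * β) t := by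
      simpa using (hasDerivAt_id t).const_mul (x₀ * β)
    have := ((hD t).add h1).add_const ((1 - w₀) / w₀)
    (convert this using 1 <;> first | rfl | exact hMdef | skip)
    simp only [hDdef]; ring
  have hxc : ContinuousOn x (Set.Ici 0) := fun t ht =>
    ((hx t ht).continuousAt).continuousWithinAt
  have hwc : ContinuousOn w (Set.Ici 0) := fun t ht =>
    ((hw t ht).continuousAt).continuousWithinAt
  have hDc : Continuous D := by
    simp only [hDdef]; continuity
  -- Step 1: mass conservation
  have hS : ∀ t : ℝ, 0 ≤ t → x t + u t + w t = 1 := by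
    have key := zero_of_linear_ode (fun _ => 0) (fun t => x t + u t + w t - 1)
      continuousOn_const
      (fun t ht => by
        have := (((hx t ht).add (hu t ht)).add (hw t ht)).sub_const 1
        (convert this using 1 <;> try rfl); ring)
      (show x 0 + u 0 + w 0 - 1 = 0 by rw [h0x, h0u, h0w]; linarith)
    intro t ht
    have h : x t + u t + w t - 1 = 0 := key t ht
    linarith
  -- Step 2: x t * D t = x₀
  have hxD : ∀ t : ℝ, 0 ≤ t → x t * D t = x₀ := by
    have key := zero_of_linear_ode (fun t => β * x t) (fun t => x t * D t - x₀)
      (continuousOn_const.mul hxc)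
      (fun t ht => by
        have hd := ((hx t ht).mul (hD t)).sub_const x₀
        (convert hd using 1 <;> try rfl)
        have huw : u t + w t = 1 - x t := by have := hS t ht; linarith
        simp only [hDdef]
        rw [huw]; ring)
      (show x 0 * D 0 - x₀ = 0 by simp [h0x, hDdef])
    intro t ht
    have h : x t * D t - x₀ = 0 := key t ht
    linarith
  -- Step 3: w t * M t = D t
  have hwM : ∀ t : ℝ, 0 ≤ t → w t * M t = D t := by
    have key := zero_of_linear_ode (fun t => β * (D t - x₀) / D t - β * w t)
      (fun t => w t * M t - D t)
      (((continuous_const.mul (hDc.sub continuous_const)).continuousOn.div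
          hDc.continuousOn (fun t _ => (hDpos t).ne'))|>.sub
        (continuousOn_const.mul hwc))
      (fun t ht => by
        have hd := ((hw t ht).mul (hM t)).sub (hD t)
        (convert hd using 1 <;> try rfl)
        have hut : u t = 1 - x t - w t := by have := hS t ht; linarith
        have hDne : D t ≠ 0 := (hDpos t).ne'
        have hxt : x t = x₀ / D t := by
          field_simp
          linarith [hxD t ht]
        rw [hut, hxt]
        have hMD : M t = D t + x₀ * β * t + (1 - w₀) / w₀ := by rw [hMdef]
        have hDD : (fun s => β * (1 - x₀) * Real.exp (β * s)) t
            = β * (D t - x₀) := by simp only [hDdef]; ring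
        field_simp
        rw [hMD]
        simp only [hDdef]
        ring)
      (show w 0 * M 0 - D 0 = 0 by
        have hM0 : M 0 = 1 / w₀ := by
          simp only [hMdef, hDdef]
          field_simp; simp
        have hD0 : D 0 = 1 := by simp [hDdef]
        rw [h0w, hM0, hD0]
        field_simp; simp)
    intro t ht
    have h : w t * M t - D t = 0 := key t ht
    linarith
  have hwformula : ∀ t : ℝ, 0 ≤ t → w t = D t / M t := by
    intro t ht
    have hMne : M t ≠ 0 := by have := hMone t ht; linarith
    rw [eq_div_iff hMne]
    exact hwM t ht
  refine ⟨fun t ht => by simpa [hDdef, hMdef, add_assoc] using hwformula t ht, ?_⟩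
  -- limit
  have hexp : Tendsto (fun t : ℝ => Real.exp (-(β * t))) atTop (nhds 0) := by
    have h1 : Tendsto (fun t : ℝ => β * t) atTop atTop :=
      Tendsto.const_mul_atTop hβ tendsto_id
    exact Real.tendsto_exp_atBot.comp (tendsto_neg_atTop_atBot.comp h1)
  have htexp : Tendsto (fun t : ℝ => t * Real.exp (-(β * t))) atTop (nhds 0) := by
    have h1 : Tendsto (fun s : ℝ => s * Real.exp (-s)) atTop (nhds 0) := by
      simpa using Real.tendsto_pow_mul_exp_neg_atTop_nhds_zero 1
    have h2 : Tendsto (fun t : ℝ => β * t) atTop atTop :=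
      Tendsto.const_mul_atTop hβ tendsto_id
    have h3 := (h1.comp h2).const_mul (1 / β)
    have : (fun t : ℝ => (1 / β) * ((fun s : ℝ => s * Real.exp (-s)) (β * t)))
        = fun t : ℝ => t * Real.exp (-(β * t)) := by
      funext t; field_simp
    rw [← this]
    simpa using h3
  have hnum : Tendsto (fun t => Real.exp (-(β * t)) * D t) atTop (nhds (1 - x₀)) := by
    have heq : (fun t => Real.exp (-(β * t)) * D t)
        = fun t => x₀ * Real.exp (-(β * t)) + (1 - x₀) := by
      funext t
      simp only [hDdef]
      rw [Real.exp_neg]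
      field_simp
    rw [heq]
    have h := (hexp.const_mul x₀).add_const (1 - x₀)
    simpa using h
  have hden : Tendsto (fun t => Real.exp (-(β * t)) * M t) atTop (nhds (1 - x₀)) := by
    have heq : (fun t => Real.exp (-(β * t)) * M t)
        = fun t => Real.exp (-(β * t)) * D t + x₀ * β * (t * Real.exp (-(β * t)))
          + ((1 - w₀) / w₀) * Real.exp (-(β * t)) := by
      funext t; simp only [hMdef]; ring
    rw [heq]
    have h := (hnum.add (htexp.const_mul (x₀ * β))).add (hexp.const_mul ((1 - w₀) / w₀))
    simpa using h
  have hne : (1 - x₀) ≠ 0 := by linarith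
  have hlim : Tendsto (fun t => D t / M t) atTop (nhds 1) := by
    have h := hnum.div hden hne
    rw [div_self hne] at h
    refine h.congr (fun t => ?_)
    exact mul_div_mul_left _ _ (Real.exp_ne_zero _)
  refine hlim.congr' ?_
  filter_upwards [eventually_ge_atTop (0:ℝ)] with t ht
  exact (hwformula t ht).symm
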